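/- If m is prime and c ∈ {0,1}^m is a vector with k ones where 1 ≤ k ≤ m-1, then the m cyclic shifts of c span a subspace of ℚ^m of dimension m. -/

import Mathlib

open Polynomial

private lemma coprime_aux (m : ℕ) (hm : m.Prime) (Q : ℚ[X])
    (hdeg : Q.natDegree ≤ m - 1) (h1 : Q.eval 1 ≠ 0)
    (hnc : ¬ ∃ a : ℚ, ∀ n < m, Q.coeff n = a) :
    IsCoprime Q ((X : ℚ[X]) ^ m - 1) := by
  haveI := Fact.mk hm
  rw [← cyclotomic_prime_mul_X_sub_one ℚ m]
  refine IsCoprime.mul_right ?_ ?_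
  · refine ((cyclotomic.irreducible_rat hm.pos).coprime_iff_not_dvd.2 ?_).symm
    intro hdvd
    have hmon := cyclotomic.monic m ℚ
    have hdΦ : (cyclotomic m ℚ).natDegree = m - 1 := by
      rw [natDegree_cyclotomic, Nat.totient_prime hm]
    have hQe : Q = C Q.leadingCoeff * cyclotomic m ℚ :=
      Polynomial.eq_leadingCoeff_mul_of_monic_of_dvd_of_natDegree_le hmon hdvd (by omega)
    apply hnc
    refine ⟨Q.leadingCoeff, fun n hn => ?_⟩
    have hcn := congrArg (fun p : ℚ[X] => p.coeff n) hQe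
    simp only [coeff_C_mul, cyclotomic_prime, finset_sum_coeff, coeff_X_pow] at hcn
    rw [Finset.sum_ite_eq (Finset.range m) n (fun _ => (1:ℚ))] at hcn
    simpa [Finset.mem_range.2 hn] using hcn
  · refine (((irreducible_X_sub_C (1:ℚ)).coprime_iff_not_dvd).2 ?_).symm
    rw [dvd_iff_isRoot]
    exact fun h => h1 h

/-- If `m` is prime and `c ∈ {0,1}^m` has `k` ones with `1 ≤ k ≤ m-1`, then the `m` cyclic
shifts of `c` span a subspace of `ℚ^m` of dimension `m`. -/
theorem shifts_full_rank_of_prime (m k : ℕ) (hm : m.Prime) [NeZero m]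
    (c : ZMod m → ℚ) (h01 : ∀ i, c i = 0 ∨ c i = 1)
    (hk : (Finset.univ.filter (fun i => c i = 1)).card = k)
    (hk1 : 1 ≤ k) (hkm : k ≤ m - 1) :
    Module.finrank ℚ (Submodule.span ℚ
      (Set.range (fun t : ZMod m => fun i : ZMod m => c (i + t)))) = m := by
  set f : ℚ[X] := X ^ m - 1 with hf
  have hmono : f.Monic := by
    have := monic_X_pow_sub_C (1 : ℚ) hm.ne_zero
    simpa [hf] using this
  have hdeg : f.natDegree = m := by
    simpa [hf] using natDegree_X_pow_sub_C (n := m) (r := (1:ℚ))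
  set R := AdjoinRoot f
  set ζ : R := AdjoinRoot.root f with hζ
  have hζm : ζ ^ m = 1 := by
    have h0 : AdjoinRoot.mk f f = 0 := AdjoinRoot.mk_self
    have : (AdjoinRoot.mk f) (X ^ m - 1) = ζ ^ m - 1 := by
      simp [map_sub, map_pow, AdjoinRoot.mk_X, hζ]
    rw [← hf, h0] at this
    linear_combination -this
  have hpow : ∀ n : ℕ, ζ ^ (n % m) = ζ ^ n := by
    intro n
    conv_rhs => rw [← Nat.mod_add_div n m, pow_add, pow_mul, hζm, one_pow, mul_one]
  have hval : ∀ a b : ZMod m, ζ ^ (a + b).val = ζ ^ a.val * ζ ^ b.val := by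
    intro a b
    rw [ZMod.val_add, hpow, pow_add]
  -- power basis
  set pb := AdjoinRoot.powerBasis' hmono with hpb
  have hdim : pb.dim = m := by rw [hpb, AdjoinRoot.powerBasis'_dim, hdeg]
  set zf : Fin pb.dim ≃ ZMod m :=
    (finCongr hdim).trans
      { toFun := fun n => (n : ZMod m)
        invFun := fun z => ⟨z.val, z.val_lt⟩
        left_inv := fun n => by
          ext; simp [ZMod.val_natCast_of_lt n.isLt]
        right_inv := fun z => by simp [ZMod.natCast_val] } with hzf
  set B := pb.basis.reindex zf with hBdef
  have hB : ∀ i : ZMod m, B i = ζ ^ i.val := by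
    intro i
    rw [hBdef, Module.Basis.reindex_apply, pb.coe_basis]
    rfl
  set e : (ZMod m → ℚ) ≃ₗ[ℚ] R := (Pi.basisFun ℚ (ZMod m)).equiv B (Equiv.refl _) with he
  have e_apply : ∀ v : ZMod m → ℚ, e v = ∑ i : ZMod m, v i • ζ ^ i.val := by
    intro v
    have hv : v = ∑ i : ZMod m, v i • (Pi.basisFun ℚ (ZMod m)) i := by
      conv_lhs => rw [← (Pi.basisFun ℚ (ZMod m)).sum_repr v]
      simp [Pi.basisFun_repr]
    conv_lhs => rw [hv]
    rw [map_sum]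
    refine Finset.sum_congr rfl fun i _ => ?_
    rw [map_smul, he, Module.Basis.equiv_apply, Equiv.refl_apply, hB]
  -- the polynomial of c
  set Q : ℚ[X] := ∑ i : ZMod m, C (c i) * X ^ i.val with hQ
  have hQcoeff : ∀ n, n < m → Q.coeff n = c n := by
    intro n hn
    rw [hQ, finset_sum_coeff]
    rw [Finset.sum_eq_single ((n : ℕ) : ZMod m)]
    · simp [coeff_C_mul, coeff_X_pow, ZMod.val_natCast_of_lt hn]
    · intro b _ hb
      have : b.val ≠ n := by
        intro hbn
        apply hb
        rw [← hbn]
        simp [ZMod.natCast_val]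
      simp only [coeff_C_mul, coeff_X_pow]
      rw [if_neg (fun h => this h.symm), mul_zero]
    · simp
  have hQdeg : Q.natDegree ≤ m - 1 := by
    rw [hQ]
    refine Polynomial.natDegree_sum_le_of_forall_le _ _ fun i _ => ?_
    refine le_trans (natDegree_C_mul_le _ _) ?_
    rw [natDegree_X_pow]
    have := ZMod.val_lt i
    omega
  have hsum : ∑ i : ZMod m, c i = (k : ℚ) := by
    rw [← Finset.sum_filter_of_ne (p := fun i => c i = 1)
      (fun i _ hne => by rcases h01 i with h | h <;> simp_all)]
    rw [Finset.sum_congr rfl (fun i hi => (Finset.mem_filter.1 hi).2), Finset.sum_const, hk]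
    simp
  have hQ1 : Q.eval 1 = (k : ℚ) := by
    rw [hQ]
    simp only [eval_finset_sum, eval_mul, eval_C, eval_pow, eval_one, eval_X, one_pow, mul_one]
    exact hsum
  have hQ1ne : Q.eval 1 ≠ 0 := by
    rw [hQ1]
    exact_mod_cast Nat.cast_ne_zero.2 (by omega)
  -- some coordinate is 1, some is 0
  obtain ⟨i1, hi1⟩ : ∃ i, c i = 1 := by
    have : (Finset.univ.filter (fun i => c i = 1)).Nonempty := by
      rw [← Finset.card_pos, hk]; omega
    obtain ⟨i, hi⟩ := this
    exact ⟨i, (Finset.mem_filter.1 hi).2⟩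
  obtain ⟨i0, hi0⟩ : ∃ i, c i = 0 := by
    by_contra h
    push_neg at h
    have hall : Finset.univ.filter (fun i => c i = 1) = Finset.univ := by
      refine Finset.eq_univ_iff_forall.2 fun i => ?_
      rcases h01 i with h' | h'
      · exact absurd h' (h i)
      · simp [h']
    rw [hall, Finset.card_univ, ZMod.card] at hk
    omega
  have hcop : IsCoprime Q ((X : ℚ[X]) ^ m - 1) := by
    refine coprime_aux m hm Q hQdeg hQ1ne ?_
    rintro ⟨a, ha⟩
    have h1 := ha i1.val i1.val_lt
    have h0 := ha i0.val i0.val_lt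
    rw [hQcoeff _ i1.val_lt, ZMod.natCast_val, ZMod.cast_id, hi1] at h1
    rw [hQcoeff _ i0.val_lt, ZMod.natCast_val, ZMod.cast_id, hi0] at h0
    rw [← h1] at h0
    exact one_ne_zero h0.symm
  -- e c is a unit
  have hec : e c = AdjoinRoot.mk f Q := by
    rw [e_apply, hQ, map_sum]
    refine Finset.sum_congr rfl fun i _ => ?_
    rw [map_mul, map_pow, AdjoinRoot.mk_X, AdjoinRoot.mk_C, ← hζ, Algebra.smul_def]
    rfl
  have hunit : IsUnit (e c) := by
    obtain ⟨a, b, hab⟩ := hcop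
    have := congrArg (AdjoinRoot.mk f) hab
    rw [map_add, map_mul, map_mul, ← hf, AdjoinRoot.mk_self, mul_zero, add_zero, map_one] at this
    rw [hec]
    exact IsUnit.of_mul_eq_one _ (by rw [mul_comm] at this; exact this)
  -- e (shift t) = ζ^(-t).val * e c
  have hshift : ∀ t : ZMod m, e (fun i => c (i + t)) = ζ ^ (-t).val * e c := by
    intro t
    rw [e_apply, e_apply, Finset.mul_sum]
    rw [← Equiv.sum_comp (Equiv.subRight t) (fun i => c (i + t) • ζ ^ i.val)]
    refine Finset.sum_congr rfl fun j _ => ?_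
    simp only [Equiv.subRight_apply, sub_add_cancel]
    rw [mul_smul_comm, ← hval, neg_add_eq_sub]
  -- span of powers of ζ is everything
  have hBspan : Submodule.span ℚ (Set.range fun s : ZMod m => ζ ^ s.val) = ⊤ := by
    rw [show (fun s : ZMod m => ζ ^ s.val) = ⇑B from funext fun i => (hB i).symm]
    exact B.span_eq
  -- mult by the unit e c preserves ⊤
  obtain ⟨u, hu⟩ := hunit
  set L : R →ₗ[ℚ] R := LinearMap.mulLeft ℚ (e c) with hL
  have hLsurj : Function.Surjective L := by
    intro y
    refine ⟨(↑u⁻¹ : R) * y, ?_⟩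
    rw [hL, LinearMap.mulLeft_apply, ← mul_assoc, ← hu]
    simp
  have hspan2 : Submodule.span ℚ (Set.range fun s : ZMod m => ζ ^ s.val * e c) = ⊤ := by
    have hmap := Submodule.map_span L (Set.range fun s : ZMod m => ζ ^ s.val)
    rw [hBspan] at hmap
    have htop : Submodule.map L ⊤ = ⊤ := by
      rw [Submodule.map_top, LinearMap.range_eq_top]
      exact hLsurj
    rw [htop] at hmap
    rw [← Set.range_comp] at hmap
    have : (⇑L ∘ fun s : ZMod m => ζ ^ s.val) = fun s : ZMod m => ζ ^ s.val * e c := by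
      funext s
      simp [hL, LinearMap.mulLeft_apply, mul_comm]
    rw [this] at hmap
    exact hmap.symm
  -- transport
  set S : Set (ZMod m → ℚ) := Set.range (fun t : ZMod m => fun i : ZMod m => c (i + t)) with hS
  have hmapS : Submodule.map (e : (ZMod m → ℚ) →ₗ[ℚ] R) (Submodule.span ℚ S) = ⊤ := by
    rw [Submodule.map_span]
    have h1 : (e : (ZMod m → ℚ) →ₗ[ℚ] R) '' S
        = Set.range (fun t : ZMod m => ζ ^ (-t).val * e c) := by
      rw [hS, ← Set.range_comp]
      exact congrArg Set.range (funext fun t => hshift t)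
    rw [h1]
    have h2 : Set.range (fun t : ZMod m => ζ ^ (-t).val * e c)
        = Set.range (fun s : ZMod m => ζ ^ s.val * e c) := by
      have := Function.Surjective.range_comp (g := fun s : ZMod m => ζ ^ s.val * e c)
        (Equiv.neg (ZMod m)).surjective
      rw [← this]
      rfl
    rw [h2]
    exact hspan2
  have hspanS : Submodule.span ℚ S = ⊤ := by
    have hinj := Submodule.map_injective_of_injective
      (f := (e : (ZMod m → ℚ) →ₗ[ℚ] R)) e.injective
    apply hinj
    rw [hmapS, Submodule.map_top]
    exact (LinearMap.range_eq_top.2 e.surjective).symm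
  rw [hspanS, finrank_top]
  rw [Module.finrank_fintype_fun_eq_card, ZMod.card]
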